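/- Let v(x,t) = (1/2) xᵀQx + m t be a polynomial on ℝⁿ × ℝ⁻ with Q a symmetric n×n matrix and m = tr Q (so v is caloric), where Q is block diagonal with A a diagonal k×k block and B a positive semi-definite (n−k)×(n−k) block. If tr A = tr B = m = 0 and ∫_{S₁} v·(Σᵢ₌₁ᵏ qᵢᵢ xᵢ²) dγ̄ ≤ 0 where qᵢᵢ are the diagonal entries of A, then A = 0 and hence v = 0. -/

import Mathlib

open MeasureTheory Set Real

/-- The weighted measure density `Ḡ(x,t) = G(x,-t)/(-t)` where `G` is the backward heat
kernel. -/
noncomputable def barHeatKernel (n : ℕ) (cn : ℝ)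
    (x : EuclideanSpace ℝ (Fin n)) (t : ℝ) : ℝ :=
  cn * (-t) ^ (-(n:ℝ)/2) * Real.exp (‖x‖ ^ 2 / (4 * t)) / (-t)


lemma integrable_pow_mul_exp_neg_mul_sq' {b : ℝ} (hb : 0 < b) (p : ℕ) :
    Integrable fun x : ℝ => x ^ p * Real.exp (-b * x ^ 2) := by
  have : (-1 : ℝ) < (p : ℝ) := lt_of_lt_of_le (by norm_num) (Nat.cast_nonneg p)
  simpa [Real.rpow_natCast] using integrable_rpow_mul_exp_neg_mul_sq hb this

lemma moment_rec {b : ℝ} (hb : 0 < b) (p : ℕ) :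
    (2 * b) * ∫ x : ℝ, x ^ (p + 2) * Real.exp (-b * x ^ 2)
      = (p + 1 : ℝ) * ∫ x : ℝ, x ^ p * Real.exp (-b * x ^ 2) := by
  set f : ℝ → ℝ := fun x => x ^ (p + 1) * Real.exp (-b * x ^ 2) with hf
  set f' : ℝ → ℝ := fun x => (p + 1 : ℝ) * (x ^ p * Real.exp (-b * x ^ 2))
      - (2 * b) * (x ^ (p + 2) * Real.exp (-b * x ^ 2)) with hf'
  have hderiv : ∀ x : ℝ, HasDerivAt f (f' x) x := by
    intro x
    have h1 : HasDerivAt (fun x : ℝ => x ^ (p + 1)) ((p + 1 : ℝ) * x ^ p) x := by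
      simpa using hasDerivAt_pow (p + 1) x
    have h2 : HasDerivAt (fun x : ℝ => Real.exp (-b * x ^ 2))
        (Real.exp (-b * x ^ 2) * (-b * (2 * x))) x := by
      exact (((hasDerivAt_pow 2 x).const_mul (-b)).exp).congr_deriv (by ring)
    have : HasDerivAt f _ x := h1.mul h2
    convert this using 1
    simp only [hf']
    ring
  have hint2 : Integrable f' := by
    exact ((integrable_pow_mul_exp_neg_mul_sq' hb p).const_mul _).sub
      ((integrable_pow_mul_exp_neg_mul_sq' hb (p+2)).const_mul _)
  have hintf : Integrable f := integrable_pow_mul_exp_neg_mul_sq' hb (p+1)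
  have h0 : ∫ x, f' x = 0 :=
    integral_eq_zero_of_hasDerivAt_of_integrable hderiv hint2 hintf
  rw [hf'] at h0
  rw [integral_sub ((integrable_pow_mul_exp_neg_mul_sq' hb p).const_mul _)
    ((integrable_pow_mul_exp_neg_mul_sq' hb (p+2)).const_mul _),
    integral_const_mul, integral_const_mul] at h0
  linarith

lemma moment2 {b : ℝ} (hb : 0 < b) :
    ∫ x : ℝ, x ^ 2 * Real.exp (-b * x ^ 2) = Real.sqrt (π / b) / (2 * b) := by
  have h := moment_rec hb 0
  simp only [pow_zero, one_mul, Nat.cast_zero, zero_add] at h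
  rw [integral_gaussian] at h
  field_simp at h ⊢
  linarith

lemma moment4 {b : ℝ} (hb : 0 < b) :
    ∫ x : ℝ, x ^ 4 * Real.exp (-b * x ^ 2) = Real.sqrt (π / b) * (3 / (4 * b ^ 2)) := by
  have h := moment_rec hb 2
  rw [moment2 hb] at h
  have hb' : b ≠ 0 := ne_of_gt hb
  norm_num at h
  field_simp at h ⊢
  linarith

lemma inner_eval {n : ℕ} {b : ℝ} (hb : 0 < b) (q : Fin n → ℝ) (S : Finset (Fin n)) :
    ∫ y : Fin n → ℝ, (∑ i ∈ S, q i * (y i)^2) * (∑ l ∈ S, q l * (y l)^2)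
        * Real.exp (-b * ∑ m, (y m)^2)
      = (Real.sqrt (π/b))^n / (4*b^2) * ((∑ i ∈ S, q i)^2 + 2 * ∑ i ∈ S, (q i)^2) := by
  have hb' : b ≠ 0 := ne_of_gt hb
  set I0 : ℝ := Real.sqrt (π / b) with hI0
  set f : Fin n → Fin n → Fin n → ℝ → ℝ :=
    fun i l m z => (if m = i then z^2 else 1) * (if m = l then z^2 else 1)
      * Real.exp (-b * z^2) with hf
  have hfeq : ∀ i l m, f i l m = fun z =>
      z ^ ((if m = i then 2 else 0) + (if m = l then 2 else 0)) * Real.exp (-b * z^2) := by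
    intro i l m; funext z; simp only [hf]
    split_ifs <;> simp [pow_add] <;> ring
  have hfint : ∀ i l m, Integrable (f i l m) := by
    intro i l m; rw [hfeq]; exact integrable_pow_mul_exp_neg_mul_sq' hb _
  have step1 : (fun y : Fin n → ℝ => (∑ i ∈ S, q i * (y i)^2) * (∑ l ∈ S, q l * (y l)^2)
        * Real.exp (-b * ∑ m, (y m)^2))
      = fun y => ∑ i ∈ S, ∑ l ∈ S, q i * q l * ∏ m, f i l m (y m) := by
    funext y
    have hexp : Real.exp (-b * ∑ m, (y m)^2) = ∏ m, Real.exp (-b * (y m)^2) := by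
      rw [← Real.exp_sum, Finset.mul_sum]
    have hprod : ∀ i l, (∏ m, f i l m (y m))
        = (y i)^2 * (y l)^2 * Real.exp (-b * ∑ m, (y m)^2) := by
      intro i l
      simp only [hf]
      rw [Finset.prod_mul_distrib, Finset.prod_mul_distrib,
        Fintype.prod_ite_eq' i (fun m => (y m)^2), Fintype.prod_ite_eq' l (fun m => (y m)^2),
        ← hexp]
    rw [Finset.sum_mul_sum, Finset.sum_mul]
    refine Finset.sum_congr rfl fun i _ => ?_
    rw [Finset.sum_mul]
    refine Finset.sum_congr rfl fun l _ => ?_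
    rw [hprod]
    ring
  rw [step1]
  rw [integral_finset_sum S (μ := volume) (fun i _ => integrable_finset_sum S fun l _ =>
    (Integrable.fintype_prod (hfint i l)).const_mul _)]
  have hterm : ∀ i l : Fin n, (∫ y : Fin n → ℝ, q i * q l * ∏ m, f i l m (y m))
      = q i * q l * (I0^n / (4*b^2) * (if i = l then 3 else 1)) := by
    intro i l
    rw [integral_const_mul, integral_fintype_prod_volume_eq_prod (f i l)]
    congr 1
    have hval : ∀ m, (∫ z : ℝ, f i l m z)
        = I0 * ((if m = i then 1/(2*b) else 1) * (if m = l then 1/(2*b) else 1)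
            * (if m = i ∧ m = l then 3 else 1)) := by
      intro m
      rcases eq_or_ne m i with hmi | hmi <;> rcases eq_or_ne m l with hml | hml
      · simp only [hfeq, if_pos hmi, if_pos hml,
          if_pos (show m = i ∧ m = l from ⟨hmi, hml⟩)]
        rw [show (fun z : ℝ => z ^ (2+2) * Real.exp (-b*z^2))
            = fun z => z^4 * Real.exp (-b*z^2) from funext fun z => by norm_num, moment4 hb]
        ring
      · simp only [hfeq, if_pos hmi, if_neg hml,
          if_neg (show ¬(m = i ∧ m = l) from fun h => hml h.2)]
        rw [show (fun z : ℝ => z ^ (2+0) * Real.exp (-b*z^2))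
            = fun z => z^2 * Real.exp (-b*z^2) from funext fun z => by norm_num, moment2 hb]
        ring
      · simp only [hfeq, if_neg hmi, if_pos hml,
          if_neg (show ¬(m = i ∧ m = l) from fun h => hmi h.1)]
        rw [show (fun z : ℝ => z ^ (0+2) * Real.exp (-b*z^2))
            = fun z => z^2 * Real.exp (-b*z^2) from funext fun z => by norm_num, moment2 hb]
        ring
      · simp only [hfeq, if_neg hmi, if_neg hml,
          if_neg (show ¬(m = i ∧ m = l) from fun h => hmi h.1)]
        rw [show (fun z : ℝ => z ^ (0+0) * Real.exp (-b*z^2))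
            = fun z => Real.exp (-b*z^2) from funext fun z => by norm_num, integral_gaussian]
        ring
    rw [Finset.prod_congr rfl fun m _ => hval m, Finset.prod_mul_distrib, Finset.prod_const,
      Finset.card_univ, Fintype.card_fin, Finset.prod_mul_distrib, Finset.prod_mul_distrib,
      Fintype.prod_ite_eq' i (fun _ => 1/(2*b)), Fintype.prod_ite_eq' l (fun _ => 1/(2*b))]
    rcases eq_or_ne i l with rfl | hil
    · have : ∀ m : Fin n, (if m = i ∧ m = i then (3:ℝ) else 1) = (if m = i then 3 else 1) := by
        intro m; simp
      rw [Finset.prod_congr rfl fun m _ => this m, Fintype.prod_ite_eq' i (fun _ => (3:ℝ)),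
        if_pos rfl]
      field_simp
      ring
    · have : ∀ m : Fin n, (if m = i ∧ m = l then (3:ℝ) else 1) = 1 := by
        intro m
        rcases eq_or_ne m i with rfl | hmi
        · rw [if_neg (show ¬(m = m ∧ m = l) from fun h => hil h.2)]
        · rw [if_neg (show ¬(m = i ∧ m = l) from fun h => hmi h.1)]
      rw [Finset.prod_congr rfl fun m _ => this m, Finset.prod_const_one, if_neg hil]
      field_simp
      ring
  calc ∑ i ∈ S, ∫ y : Fin n → ℝ, ∑ l ∈ S, q i * q l * ∏ m, f i l m (y m)
      = ∑ i ∈ S, ∑ l ∈ S, q i * q l * (I0^n / (4*b^2) * (if i = l then 3 else 1)) := by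
        refine Finset.sum_congr rfl fun i _ => ?_
        rw [integral_finset_sum S (μ := volume) fun l _ => (Integrable.fintype_prod (hfint i l)).const_mul _]
        exact Finset.sum_congr rfl fun l _ => hterm i l
    _ = I0^n / (4*b^2) * ((∑ i ∈ S, q i)^2 + 2 * ∑ i ∈ S, (q i)^2) := by
        set c : ℝ := I0^n / (4*b^2)
        have h1 : ∀ i ∈ S, ∑ l ∈ S, q i * q l * (c * (if i = l then (3:ℝ) else 1))
            = c * (q i * ∑ l ∈ S, q l) + c * (2 * (q i)^2) := by
          intro i hi
          have h2 : ∀ l ∈ S, q i * q l * (c * (if i = l then (3:ℝ) else 1))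
              = c * (q i * q l) + (if i = l then c * (2 * ((q i)*(q i))) else 0) := by
            intro l _; split_ifs with h
            · rw [← h]; ring
            · ring
          rw [Finset.sum_congr rfl h2, Finset.sum_add_distrib, Finset.sum_ite_eq S i
            (fun _ => c * (2 * ((q i)*(q i)))), if_pos hi, ← Finset.mul_sum, ← Finset.mul_sum]
          ring
        rw [Finset.sum_congr rfl h1, Finset.sum_add_distrib, ← Finset.mul_sum, ← Finset.mul_sum,
          ← Finset.mul_sum, ← Finset.sum_mul]
        ring

lemma const_eval {n : ℕ} {s : ℝ} (hs : 0 < s) :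
    (Real.sqrt (π / (4*s)⁻¹))^n / (4 * ((4*s)⁻¹)^2) * (s ^ (-(n:ℝ)/2) / s)
      = (Real.sqrt (4*π))^n * (4*s) := by
  have h1 : π / (4*s)⁻¹ = (4*π) * s := by field_simp
  rw [h1, Real.sqrt_mul (by positivity), mul_pow]
  have h2 : (Real.sqrt s)^n = s ^ ((n:ℝ)/2) := by
    rw [Real.sqrt_eq_rpow, ← Real.rpow_natCast (s ^ ((1:ℝ)/2)) n, ← Real.rpow_mul hs.le]
    ring_nf
  rw [h2]
  have h3 : s ^ ((n:ℝ)/2) * s ^ (-(n:ℝ)/2) = 1 := by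
    rw [← Real.rpow_add hs, show (n:ℝ)/2 + -(n:ℝ)/2 = 0 by ring, Real.rpow_zero]
  have hs' : s ≠ 0 := ne_of_gt hs
  set P : ℝ := Real.sqrt (4*π) with hP
  set X : ℝ := s ^ ((n:ℝ)/2) with hX
  set Y : ℝ := s ^ (-(n:ℝ)/2) with hY
  have expand : ∀ A B : ℝ, A * B = 1 →
      P^n * A / (4 * ((4*s)⁻¹)^2) * (B / s) = P^n * (4*s) := by
    intro A B hAB
    field_simp
    linear_combination (P^n) * hAB
  exact expand X Y h3

lemma ioc_eval (C : ℝ) : ∫ t in Ioc (-1:ℝ) 0, C * (-t) = C * (1/2) := by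
  rw [← intervalIntegral.integral_of_le (by norm_num : (-1:ℝ) ≤ 0)]
  rw [intervalIntegral.integral_const_mul, intervalIntegral.integral_neg, integral_id]
  norm_num

/-- Let `v(x,t) = ½ xᵀQx + mt` be caloric (`m = tr Q`), with `Q` symmetric and block
diagonal: a diagonal `k×k` block `A` and a positive semi-definite block `B` on the
remaining indices.  If `tr A = tr B = m = 0` and
`∫_{S₁} v ⬝ (Σ_{i<k} qᵢᵢ xᵢ²) dγ̄ ≤ 0`, then `A = 0` and hence `v = 0`. -/
theorem singular_blowup_vanishes (n k : ℕ) (hk : k ≤ n) (cn : ℝ) (hcn : 0 < cn)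
    (Q : Matrix (Fin n) (Fin n) ℝ) (m : ℝ)
    (hsym : Q.IsSymm)
    (hblock : ∀ i j : Fin n, i ≠ j → ((i:ℕ) < k ∨ (j:ℕ) < k) → Q i j = 0)
    (hBpsd : ∀ w : Fin n → ℝ, (∀ i : Fin n, (i:ℕ) < k → w i = 0) →
      0 ≤ ∑ i, ∑ j, Q i j * w i * w j)
    (hm : m = Matrix.trace Q)
    (htrA : ∑ i ∈ Finset.univ.filter (fun i : Fin n => (i:ℕ) < k), Q i i = 0)
    (htrB : ∑ i ∈ Finset.univ.filter (fun i : Fin n => ¬ (i:ℕ) < k), Q i i = 0)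
    (hm0 : m = 0)
    (v : EuclideanSpace ℝ (Fin n) → ℝ → ℝ)
    (hv : ∀ x t, v x t = (1/2) * (∑ i, ∑ j, Q i j * x i * x j) + m * t)
    (hint : (∫ t in Ioc (-1:ℝ) 0, ∫ x : EuclideanSpace ℝ (Fin n),
        v x t * (∑ i ∈ Finset.univ.filter (fun i : Fin n => (i:ℕ) < k),
          Q i i * (x i) ^ 2) * barHeatKernel n cn x t) ≤ 0) :
    (∀ i : Fin n, (i:ℕ) < k → Q i i = 0) ∧ (∀ x t, v x t = 0) := by
  classical
  -- Step 1: structural facts about Q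
  have hqf : ∀ (c : ℝ) (i j : Fin n), ¬((i:ℕ) < k) → ¬((j:ℕ) < k) → i ≠ j →
      0 ≤ Q i i + c * Q i j + c * Q j i + c * c * Q j j := by
    intro c i j hi hj hij
    set w : Fin n → ℝ := fun r => (if r = i then 1 else 0) + (if r = j then c else 0) with hw
    have hw0 : ∀ r : Fin n, (r:ℕ) < k → w r = 0 := by
      intro r hr
      have h1 : r ≠ i := fun h => hi (h ▸ hr)
      have h2 : r ≠ j := fun h => hj (h ▸ hr)
      simp [hw, h1, h2]
    have h := hBpsd w hw0
    have hrow : ∀ r : Fin n, ∑ l, Q r l * w r * w l = w r * (Q r i + c * Q r j) := by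
      intro r
      have : ∀ l, Q r l * w r * w l
          = w r * ((if l = i then Q r l else 0) + (if l = j then c * Q r l else 0)) := by
        intro l; simp only [hw]; split_ifs <;> ring
      rw [Finset.sum_congr rfl fun l _ => this l, ← Finset.mul_sum, Finset.sum_add_distrib,
        Finset.sum_ite_eq' Finset.univ i (fun l => Q r l),
        Finset.sum_ite_eq' Finset.univ j (fun l => c * Q r l)]
      simp
    rw [Finset.sum_congr rfl fun r _ => hrow r] at h
    have : ∀ r : Fin n, w r * (Q r i + c * Q r j)
        = (if r = i then Q r i + c * Q r j else 0)
          + (if r = j then c * (Q r i + c * Q r j) else 0) := by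
      intro r; simp only [hw]; split_ifs <;> ring
    rw [Finset.sum_congr rfl fun r _ => this r, Finset.sum_add_distrib,
      Finset.sum_ite_eq' Finset.univ i, Finset.sum_ite_eq' Finset.univ j] at h
    simp only [Finset.mem_univ, if_true] at h
    nlinarith [h]
  have hqd : ∀ i : Fin n, ¬((i:ℕ) < k) → 0 ≤ Q i i := by
    intro i hi
    set w : Fin n → ℝ := fun r => if r = i then 1 else 0 with hw
    have hw0 : ∀ r : Fin n, (r:ℕ) < k → w r = 0 := by
      intro r hr
      have h1 : r ≠ i := fun h => hi (h ▸ hr)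
      simp [hw, h1]
    have h := hBpsd w hw0
    have hrow : ∀ r : Fin n, ∑ l, Q r l * w r * w l = w r * Q r i := by
      intro r
      have : ∀ l, Q r l * w r * w l = w r * (if l = i then Q r l else 0) := by
        intro l; simp only [hw]; split_ifs <;> ring
      rw [Finset.sum_congr rfl fun l _ => this l, ← Finset.mul_sum,
        Finset.sum_ite_eq' Finset.univ i (fun l => Q r l)]
      simp
    rw [Finset.sum_congr rfl fun r _ => hrow r] at h
    have : ∀ r : Fin n, w r * Q r i = (if r = i then Q r i else 0) := by
      intro r; simp only [hw]; split_ifs <;> ring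
    rw [Finset.sum_congr rfl fun r _ => this r, Finset.sum_ite_eq' Finset.univ i] at h
    simpa using h
  have hdiagB : ∀ i : Fin n, ¬((i:ℕ) < k) → Q i i = 0 := by
    have hnn : ∀ i ∈ Finset.univ.filter (fun i : Fin n => ¬ (i:ℕ) < k), 0 ≤ Q i i :=
      fun i hi => hqd i (by simpa using (Finset.mem_filter.mp hi).2)
    intro i hi
    exact (Finset.sum_eq_zero_iff_of_nonneg hnn).mp htrB i (by simpa using hi)
  have hoff : ∀ i j : Fin n, i ≠ j → Q i j = 0 := by
    intro i j hij
    rcases Nat.lt_or_ge (i:ℕ) k with hi | hi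
    · exact hblock i j hij (Or.inl hi)
    rcases Nat.lt_or_ge (j:ℕ) k with hj | hj
    · exact hblock i j hij (Or.inr hj)
    have hi' : ¬((i:ℕ) < k) := Nat.not_lt.mpr hi
    have hj' : ¬((j:ℕ) < k) := Nat.not_lt.mpr hj
    have h := hqf (-Q i j) i j hi' hj' hij
    have hsji : Q j i = Q i j := hsym.apply i j ▸ rfl
    rw [hdiagB i hi', hdiagB j hj', hsji] at h
    nlinarith [h]
  set S : Finset (Fin n) := Finset.univ.filter (fun i : Fin n => (i:ℕ) < k) with hS
  -- Step 2: simplify v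
  have hvsimp : ∀ (x : EuclideanSpace ℝ (Fin n)) (t : ℝ),
      v x t = (1/2) * ∑ i ∈ S, Q i i * (x i)^2 := by
    intro x t
    rw [hv, hm0, zero_mul, add_zero]
    congr 1
    have hin : ∀ i : Fin n, ∑ j, Q i j * x i * x j = Q i i * (x i)^2 := by
      intro i
      rw [Finset.sum_eq_single i (fun j _ hji => by rw [hoff i j (Ne.symm hji), zero_mul, zero_mul])
        (fun h => absurd (Finset.mem_univ i) h)]
      ring
    rw [Finset.sum_congr rfl fun i _ => hin i]
    refine (Finset.sum_subset (Finset.filter_subset _ _) fun i _ hiS => ?_).symm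
    rw [hdiagB i (by simpa [hS] using hiS), zero_mul]
  -- Step 3: evaluate the inner integral for each t
  have hnormsq : ∀ x : EuclideanSpace ℝ (Fin n), ‖x‖^2 = ∑ i, (x i)^2 := by
    intro x
    rw [EuclideanSpace.norm_eq, Real.sq_sqrt (by positivity)]
    simp [sq_abs]
  have key : ∀ t ∈ Ioc (-1:ℝ) 0, (∫ x : EuclideanSpace ℝ (Fin n),
        v x t * (∑ i ∈ S, Q i i * (x i) ^ 2) * barHeatKernel n cn x t)
      = (4*cn*(Real.sqrt (4*π))^n * ∑ i ∈ S, (Q i i)^2) * (-t) := by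
    intro t ht
    rcases eq_or_lt_of_le ht.2 with h0 | hneg
    · rw [h0]
      simp [barHeatKernel]
    · have ht0 : t ≠ 0 := ne_of_lt hneg
      set s : ℝ := -t with hs
      have hspos : 0 < s := by simp only [hs]; linarith
      set b : ℝ := (4*s)⁻¹ with hb
      have hbpos : 0 < b := by rw [hb]; positivity
      have hpt : ∀ x : EuclideanSpace ℝ (Fin n),
          v x t * (∑ i ∈ S, Q i i * (x i) ^ 2) * barHeatKernel n cn x t
          = (cn * s ^ (-(n:ℝ)/2) / s * (1/2)) *
            ((∑ i ∈ S, Q i i * (x i)^2) * (∑ l ∈ S, Q l l * (x l)^2)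
              * Real.exp (-b * ∑ m, (x m)^2)) := by
        intro x
        rw [hvsimp x t]
        simp only [barHeatKernel]
        have hnorm : ‖x‖^2 / (4*t) = -b * ∑ m, (x m)^2 := by
          rw [hnormsq x, hb, hs]
          field_simp
        rw [hnorm, ← hs]
        ring
      simp only [hpt]
      rw [integral_const_mul]
      have htr := (EuclideanSpace.volume_preserving_symm_measurableEquiv_toLp (Fin n)).integral_comp'
        (fun y : Fin n → ℝ => (∑ i ∈ S, Q i i * (y i)^2) * (∑ l ∈ S, Q l l * (y l)^2)
          * Real.exp (-b * ∑ m, (y m)^2))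
      simp only [MeasurableEquiv.coe_toLp_symm] at htr
      have hie := inner_eval hbpos (fun i => Q i i) S
      simp only [] at hie
      rw [htr, hie, show (∑ i ∈ S, Q i i) = 0 from htrA]
      have hc := const_eval (n := n) (s := s) hspos
      rw [hb]
      linear_combination (cn * (∑ i ∈ S, (Q i i)^2)) * hc
  rw [setIntegral_congr_fun measurableSet_Ioc key] at hint
  rw [ioc_eval] at hint
  have hP : 0 < (Real.sqrt (4*π))^n := pow_pos (Real.sqrt_pos.mpr (by positivity)) n
  have hsum_nonneg : 0 ≤ ∑ i ∈ S, (Q i i)^2 := Finset.sum_nonneg fun i _ => sq_nonneg _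
  have hSzero : ∑ i ∈ S, (Q i i)^2 = 0 := by
    rcases lt_or_eq_of_le hsum_nonneg with hpos | heq
    · exfalso
      have h4 : 0 < 4*cn*(Real.sqrt (4*π))^n := by positivity
      nlinarith [mul_pos h4 hpos]
    · exact heq.symm
  have hdiagA : ∀ i ∈ S, Q i i = 0 := by
    intro i hi
    have := (Finset.sum_eq_zero_iff_of_nonneg fun i _ => sq_nonneg (Q i i)).mp hSzero i hi
    exact pow_eq_zero_iff (by norm_num) |>.mp this
  refine ⟨fun i hik => hdiagA i (by simp [hS, hik]), fun x t => ?_⟩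
  rw [hvsimp x t, Finset.sum_eq_zero fun i hi => by rw [hdiagA i hi, zero_mul], mul_zero]
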